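/- arXiv:1601.02328 — 2 statements merged into one kernel-verified Lean document; each statement's English description precedes it below -/
import Mathlib

section
/- If C is an R-linear code of length n (an R-submodule of Rⁿ) with minimum Lee distance d_L, then its Gray image Φ(C) ⊆ (ZMod 2)^{3n} is an F₂-linear subspace of length 3n satisfying |Φ(C)| = |C|, and the minimum Hamming distance of Φ(C) equals d_L. -/
open Polynomial

set_option synthInstance.maxHeartbeats 1000000
set_option maxHeartbeats 1000000

noncomputable section

/-- The ring `R = F₂ + uF₂ + u²F₂` with `u³ = u`, realized as `(ZMod 2)[X] ⧸ ⟨X³ - X⟩`. -/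
abbrev R : Type := Polynomial (ZMod 2) ⧸ Ideal.span ({X ^ 3 - X} : Set (Polynomial (ZMod 2)))

/-- `u` is the residue class of `X` in `R`. -/
def u : R := Ideal.Quotient.mk _ (X : Polynomial (ZMod 2))

/-- The element `a + u·b + u²·c` of `R`. -/
def elt (a b c : ZMod 2) : R :=
  algebraMap (ZMod 2) R a + algebraMap (ZMod 2) R b * u + algebraMap (ZMod 2) R c * u ^ 2

/-- `Φ` is the Gray map: `Φ(a + u·b + u²·c) = (a, a + c, b)`. -/
def GraySpec (Φ : R → Fin 3 → ZMod 2) : Prop :=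
  ∀ a b c : ZMod 2, Φ (elt a b c) = ![a, a + c, b]

/-- The coordinatewise extension of the Gray map, `Rⁿ → (ZMod 2)^{3n}`. -/
def grayExt (Φ : R → Fin 3 → ZMod 2) (n : ℕ) (x : Fin n → R) :
    Fin n × Fin 3 → ZMod 2 :=
  fun p => Φ (x p.1) p.2

/-! ### Auxiliary lemmas -/

lemma u_cube : u ^ 3 = u := by
  have h : (Ideal.Quotient.mk (Ideal.span ({X ^ 3 - X} : Set (Polynomial (ZMod 2)))) (X ^ 3 - X)) = 0 :=
    Ideal.Quotient.eq_zero_iff_mem.mpr (Ideal.subset_span rfl)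
  rw [map_sub, map_pow, sub_eq_zero] at h
  exact h

lemma elt_add (a b c a' b' c' : ZMod 2) :
    elt a b c + elt a' b' c' = elt (a + a') (b + b') (c + c') := by
  simp only [elt, map_add]; ring

lemma elt_zero : elt 0 0 0 = 0 := by simp [elt]

lemma mk_C (t : ZMod 2) :
    Ideal.Quotient.mk (Ideal.span ({X ^ 3 - X} : Set (Polynomial (ZMod 2)))) (C t)
      = algebraMap (ZMod 2) R t := rfl

lemma exists_elt (r : R) : ∃ a b c, r = elt a b c := by
  obtain ⟨p, rfl⟩ := Ideal.Quotient.mk_surjective r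
  induction p using Polynomial.induction_on' with
  | add p q hp hq =>
    obtain ⟨a, b, c, hp⟩ := hp; obtain ⟨a', b', c', hq⟩ := hq
    exact ⟨a + a', b + b', c + c', by rw [map_add, hp, hq, elt_add]⟩
  | monomial k t =>
    have hpow : ∀ k : ℕ, u ^ k = 1 ∨ u ^ k = u ∨ u ^ k = u ^ 2 := by
      intro k
      induction k using Nat.strong_induction_on with
      | _ k ih =>
        match k with
        | 0 => left; simp
        | 1 => right; left; simp
        | 2 => right; right; rfl
        | (m + 3) =>
          have h3 : u ^ (m + 3) = u ^ (m + 1) := by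
            calc u ^ (m + 3) = u ^ m * u ^ 3 := by ring
            _ = u ^ m * u := by rw [u_cube]
            _ = u ^ (m + 1) := by ring
          rw [h3]; exact ih (m + 1) (by omega)
    have hm : (Ideal.Quotient.mk (Ideal.span ({X ^ 3 - X} : Set (Polynomial (ZMod 2)))))
        (monomial k t) = algebraMap (ZMod 2) R t * u ^ k := by
      rw [← Polynomial.C_mul_X_pow_eq_monomial, map_mul, map_pow, mk_C]; rfl
    rcases hpow k with h | h | h
    · exact ⟨t, 0, 0, by rw [hm, h]; simp [elt]⟩
    · exact ⟨0, t, 0, by rw [hm, h]; simp [elt]⟩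
    · exact ⟨0, 0, t, by rw [hm, h]; simp [elt]⟩

variable {Φ : R → Fin 3 → ZMod 2}

lemma zmod2_cases (x : ZMod 2) : x = 0 ∨ x = 1 := by revert x; decide

lemma Phi_add (hΦ : GraySpec Φ) (r r' : R) : Φ (r + r') = Φ r + Φ r' := by
  obtain ⟨a, b, c, rfl⟩ := exists_elt r
  obtain ⟨a', b', c', rfl⟩ := exists_elt r'
  rw [elt_add, hΦ, hΦ, hΦ]
  funext i
  fin_cases i <;> simp <;> ring

lemma Phi_inj (hΦ : GraySpec Φ) : Function.Injective Φ := by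
  intro r r' h
  obtain ⟨a, b, c, rfl⟩ := exists_elt r
  obtain ⟨a', b', c', rfl⟩ := exists_elt r'
  rw [hΦ, hΦ] at h
  have h0 := congrFun h 0
  have h1 := congrFun h 1
  have h2 := congrFun h 2
  simp at h0 h1 h2
  obtain rfl := h0; obtain rfl := h2
  have : c = c' := by
    rcases zmod2_cases a with rfl | rfl <;> simpa using h1
  rw [this]

lemma Phi_sub (hΦ : GraySpec Φ) (r r' : R) : Φ (r - r') = Φ r - Φ r' := by
  have h := Phi_add hΦ (r - r') r'
  rw [sub_add_cancel] at h
  rw [h]; abel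

lemma Phi_zero (hΦ : GraySpec Φ) : Φ 0 = 0 := by
  have h := hΦ 0 0 0
  rw [elt_zero] at h
  rw [h]; funext i; fin_cases i <;> simp

lemma Phi_norm (hΦ : GraySpec Φ) (wL : R → ℕ)
    (h0 : wL 0 = 0) (h1 : wL 1 = 2) (hu : wL u = 1) (hu2 : wL (u ^ 2) = 1)
    (h1u : wL (1 + u) = 3) (h1u2 : wL (1 + u ^ 2) = 1)
    (huu2 : wL (u + u ^ 2) = 2) (h1uu2 : wL (1 + u + u ^ 2) = 2)
    (r : R) : hammingNorm (Φ r) = wL r := by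
  obtain ⟨a, b, c, rfl⟩ := exists_elt r
  rw [hΦ]
  rcases zmod2_cases a with rfl | rfl <;> rcases zmod2_cases b with rfl | rfl <;>
    rcases zmod2_cases c with rfl | rfl
  · rw [elt_zero, h0]; decide
  · rw [show elt 0 0 1 = u ^ 2 by simp [elt], hu2]; decide
  · rw [show elt 0 1 0 = u by simp [elt], hu]; decide
  · rw [show elt 0 1 1 = u + u ^ 2 by simp [elt], huu2]; decide
  · rw [show elt 1 0 0 = 1 by simp [elt], h1]; decide
  · rw [show elt 1 0 1 = 1 + u ^ 2 by simp [elt], h1u2]; decide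
  · rw [show elt 1 1 0 = 1 + u by simp [elt], h1u]; decide
  · rw [show elt 1 1 1 = 1 + u + u ^ 2 by simp [elt], h1uu2]; decide

lemma gray_add (hΦ : GraySpec Φ) (n : ℕ) (x y : Fin n → R) :
    grayExt Φ n (x + y) = grayExt Φ n x + grayExt Φ n y := by
  funext p; simp [grayExt, Phi_add hΦ]

lemma gray_zero (hΦ : GraySpec Φ) (n : ℕ) : grayExt Φ n 0 = 0 := by
  funext p; simp [grayExt, Phi_zero hΦ]

lemma gray_inj (hΦ : GraySpec Φ) (n : ℕ) : Function.Injective (grayExt Φ n) := by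
  intro x y h
  funext i
  apply Phi_inj hΦ
  funext j
  exact congrFun h (i, j)

lemma gray_norm (n : ℕ) (z : Fin n → R) :
    hammingNorm (grayExt Φ n z) = ∑ i, hammingNorm (Φ (z i)) := by
  simp only [hammingNorm]
  rw [Finset.card_filter, Fintype.sum_prod_type]
  congr 1
  funext i
  rw [Finset.card_filter]
  rfl

lemma gray_dist (hΦ : GraySpec Φ) (n : ℕ) (x y : Fin n → R) :
    hammingDist (grayExt Φ n x) (grayExt Φ n y) = ∑ i, hammingNorm (Φ (x i - y i)) := by
  rw [hammingDist_comm, hammingDist_eq_hammingNorm, neg_add_eq_sub]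
  have h : grayExt Φ n x - grayExt Φ n y = grayExt Φ n (x - y) := by
    funext p; simp [grayExt, Phi_sub hΦ]
  rw [h, gray_norm]
  simp

/-- If `C` is an `(n, k, d_L)` linear code over `R` then its Gray image `Φ(C)` is a binary
linear code of length `3n` with `|Φ(C)| = |C|` whose minimum Hamming distance equals `d_L`. -/
theorem grayImage_of_linearCode (n : ℕ) (Φ : R → Fin 3 → ZMod 2) (hΦ : GraySpec Φ)
    (wL : R → ℕ)
    (h0 : wL 0 = 0) (h1 : wL 1 = 2) (hu : wL u = 1) (hu2 : wL (u ^ 2) = 1)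
    (h1u : wL (1 + u) = 3) (h1u2 : wL (1 + u ^ 2) = 1)
    (huu2 : wL (u + u ^ 2) = 2) (h1uu2 : wL (1 + u + u ^ 2) = 2)
    (C : Submodule R (Fin n → R)) (hC : (C : Set (Fin n → R)).Nontrivial)
    (dL : ℕ)
    (hdL : IsLeast {d : ℕ | ∃ c ∈ C, ∃ c' ∈ C, c ≠ c' ∧ d = ∑ i, wL (c i - c' i)} dL) :
    ∃ V : Submodule (ZMod 2) (Fin n × Fin 3 → ZMod 2),
      (V : Set (Fin n × Fin 3 → ZMod 2)) = grayExt Φ n '' (C : Set (Fin n → R)) ∧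
      Nat.card (grayExt Φ n '' (C : Set (Fin n → R)) : Set (Fin n × Fin 3 → ZMod 2)) =
        Nat.card C ∧
      IsLeast {d : ℕ | ∃ v ∈ grayExt Φ n '' (C : Set (Fin n → R)),
        ∃ v' ∈ grayExt Φ n '' (C : Set (Fin n → R)), v ≠ v' ∧ d = hammingDist v v'} dL := by
  have hnorm := Phi_norm hΦ wL h0 h1 hu hu2 h1u h1u2 huu2 h1uu2
  refine ⟨{ carrier := grayExt Φ n '' (C : Set (Fin n → R))
            add_mem' := ?_
            zero_mem' := ?_
            smul_mem' := ?_ }, rfl, ?_, ?_⟩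
  · rintro v v' ⟨x, hx, rfl⟩ ⟨y, hy, rfl⟩
    exact ⟨x + y, C.add_mem hx hy, gray_add hΦ n x y⟩
  · exact ⟨0, C.zero_mem, gray_zero hΦ n⟩
  · rintro t v ⟨x, hx, rfl⟩
    rcases zmod2_cases t with rfl | rfl
    · rw [zero_smul]
      exact ⟨0, C.zero_mem, gray_zero hΦ n⟩
    · rw [one_smul]
      exact ⟨x, hx, rfl⟩
  · rw [Nat.card_image_of_injective (gray_inj hΦ n)]
    rfl
  · have hset : {d : ℕ | ∃ v ∈ grayExt Φ n '' (C : Set (Fin n → R)),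
        ∃ v' ∈ grayExt Φ n '' (C : Set (Fin n → R)), v ≠ v' ∧ d = hammingDist v v'} =
        {d : ℕ | ∃ c ∈ C, ∃ c' ∈ C, c ≠ c' ∧ d = ∑ i, wL (c i - c' i)} := by
      ext d
      constructor
      · rintro ⟨v, ⟨x, hx, rfl⟩, v', ⟨y, hy, rfl⟩, hne, rfl⟩
        refine ⟨x, hx, y, hy, fun h => hne (by rw [h]), ?_⟩
        rw [gray_dist hΦ]
        exact Finset.sum_congr rfl fun i _ => hnorm _
      · rintro ⟨x, hx, y, hy, hne, rfl⟩
        refine ⟨grayExt Φ n x, ⟨x, hx, rfl⟩, grayExt Φ n y, ⟨y, hy, rfl⟩,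
          fun h => hne (gray_inj hΦ n h), ?_⟩
        rw [gray_dist hΦ]
        exact (Finset.sum_congr rfl fun i _ => hnorm _).symm
    rw [hset]
    exact hdL
end
end

section
/- Let n be an odd positive integer and let f₁, f₂, f₃ ∈ (ZMod 2)[Y] be monic polynomials with f₁·f₂·f₃ = Yⁿ - 1. Let S = (ZMod 2)[X] ⧸ ⟨X²⟩ with w the residue class of X, and let C = { c : Fin n → S | Σᵢ cᵢ·Yⁱ lies in the ideal of S[Y] generated by f₁·f₂, w·f₁·f₃, and Yⁿ - 1 } be the corresponding cyclic code of length n over S, with dual C^⊥ = { y : Fin n → S | Σᵢ cᵢ·yᵢ = 0 for all c ∈ C }. Then C is self-dual (C = C^⊥) if and only if f₁ = f̂₃ and f₂ = f̂₂, where f̂ denotes the reciprocal polynomial f̂(Y) = Y^{deg f}·f(1/Y). -/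
open Polynomial

noncomputable section

/-- The chain ring `S = F₂ + wF₂` with `w² = 0`, realized as `(ZMod 2)[X] ⧸ ⟨X²⟩`. -/
abbrev S : Type := Polynomial (ZMod 2) ⧸ Ideal.span ({X ^ 2} : Set (Polynomial (ZMod 2)))

/-- `w` is the residue class of `X` in `S`. -/
def w : S := Ideal.Quotient.mk _ (X : Polynomial (ZMod 2))

/-- The cyclic code `C = (f₁f₂, w·f₁f₃)` of length `n` over `S`: the coefficient vectors
`c ∈ Sⁿ` with `Σᵢ cᵢ·Yⁱ` in the ideal generated by `f₁f₂`, `w·f₁f₃` and `Yⁿ - 1`. -/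
def cyclicCodeS (n : ℕ) (f₁ f₂ f₃ : Polynomial (ZMod 2)) : Set (Fin n → S) :=
  {c | (∑ i : Fin n, C (c i) * X ^ (i : ℕ)) ∈
    Ideal.span ({(f₁ * f₂).map (algebraMap (ZMod 2) S),
      C w * (f₁ * f₃).map (algebraMap (ZMod 2) S),
      X ^ n - 1} : Set (Polynomial S))}

/-- The dual of a code of length `n` over a commutative ring `A`, with respect to the
standard inner product `Σᵢ cᵢyᵢ`. -/
def dualCode {A : Type*} [CommRing A] (n : ℕ) (D : Set (Fin n → A)) : Set (Fin n → A) :=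
  {y | ∀ c ∈ D, ∑ i, c i * y i = 0}

/-! ### Auxiliary machinery -/

abbrev φ : ZMod 2 →+* S := algebraMap (ZMod 2) S

lemma w_mul_w : w * w = 0 := by
  show Ideal.Quotient.mk _ X * Ideal.Quotient.mk _ X = 0
  rw [← map_mul, ← sq, Ideal.Quotient.eq_zero_iff_mem]
  exact Ideal.subset_span rfl

lemma s_unique {x y : ZMod 2} (h : φ x + w * φ y = 0) : x = 0 ∧ y = 0 := by
  have h2 : Ideal.Quotient.mk (Ideal.span ({X ^ 2} : Set (Polynomial (ZMod 2))))
      (C x + X * C y) = 0 := by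
    rw [map_add, map_mul]; exact h
  rw [Ideal.Quotient.eq_zero_iff_mem, Ideal.mem_span_singleton] at h2
  have hd : (C x + X * C y).degree < 2 := by
    apply lt_of_le_of_lt (degree_add_le _ _)
    simp only [max_lt_iff]
    constructor
    · exact lt_of_le_of_lt (degree_C_le) (by norm_num)
    · apply lt_of_le_of_lt (degree_mul_le _ _)
      calc degree (X : Polynomial (ZMod 2)) + degree (C y) ≤ 1 + 0 := by
            exact add_le_add degree_X.le degree_C_le
        _ < 2 := by norm_num
  have hz : C x + X * C y = 0 := by
    by_contra hne
    have := Polynomial.degree_le_of_dvd h2 hne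
    rw [degree_X_pow] at this
    exact absurd (lt_of_le_of_lt this hd) (lt_irrefl _)
  constructor
  · have := congrArg (fun p => Polynomial.coeff p 0) hz
    simpa using this
  · have := congrArg (fun p => Polynomial.coeff p 1) hz
    simpa using this

lemma s_zero_iff {x y : ZMod 2} : φ x + w * φ y = 0 ↔ x = 0 ∧ y = 0 := by
  constructor
  · exact s_unique
  · rintro ⟨rfl, rfl⟩; simp

lemma s_decomp (s : S) : ∃ x y : ZMod 2, s = φ x + w * φ y := by
  obtain ⟨p, rfl⟩ := Ideal.Quotient.mk_surjective s
  refine ⟨p.coeff 0, p.coeff 1, ?_⟩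
  have : (X : Polynomial (ZMod 2)) ^ 2 ∣ p - (C (p.coeff 0) + X * C (p.coeff 1)) := by
    rw [X_pow_dvd_iff]
    intro d hd
    interval_cases d <;> simp
  rw [show φ (p.coeff 0) + w * φ (p.coeff 1)
      = Ideal.Quotient.mk _ (C (p.coeff 0) + X * C (p.coeff 1)) by
    rw [map_add, map_mul]; rfl]
  rw [Ideal.Quotient.mk_eq_mk_iff_sub_mem, Ideal.mem_span_singleton]
  exact this

lemma fun_decomp {n : ℕ} (c : Fin n → S) :
    ∃ a b : Fin n → ZMod 2, ∀ i, c i = φ (a i) + w * φ (b i) := by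
  choose a b h using fun i => s_decomp (c i)
  exact ⟨a, b, h⟩

/-! ### The map `Ψ` realizing `S[X] = F₂[X] ⊕ w·F₂[X]` -/

def Ψ (p q : Polynomial (ZMod 2)) : Polynomial S := p.map φ + C w * q.map φ

lemma psi_mul (p q p' q' : Polynomial (ZMod 2)) :
    Ψ p q * Ψ p' q' = Ψ (p * p') (p * q' + q * p') := by
  unfold Ψ
  have hw : (C w : Polynomial S) * C w = 0 := by rw [← C_mul, w_mul_w, C_0]
  simp only [Polynomial.map_mul, Polynomial.map_add]
  linear_combination (q.map φ * q'.map φ) * hw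

lemma psi_surj (F : Polynomial S) : ∃ p q, F = Ψ p q := by
  induction F using Polynomial.induction_on' with
  | add f g hf hg =>
    obtain ⟨p, q, rfl⟩ := hf
    obtain ⟨p', q', rfl⟩ := hg
    exact ⟨p + p', q + q', by unfold Ψ; simp only [Polynomial.map_add]; ring⟩
  | monomial k s =>
    obtain ⟨x, y, rfl⟩ := s_decomp s
    refine ⟨C x * X ^ k, C y * X ^ k, ?_⟩
    unfold Ψ
    simp only [Polynomial.map_mul, Polynomial.map_pow, map_C, map_X]
    rw [← C_mul_X_pow_eq_monomial, C_add, C_mul]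
    ring

lemma psi_inj {p q p' q' : Polynomial (ZMod 2)} (h : Ψ p q = Ψ p' q') : p = p' ∧ q = q' := by
  have h0 : Ψ (p - p') (q - q') = 0 := by
    unfold Ψ at *
    simp only [Polynomial.map_sub]
    rw [mul_sub, sub_add_sub_comm] at *
    rw [h]; ring
  have key : ∀ i, (p - p').coeff i = 0 ∧ (q - q').coeff i = 0 := by
    intro i
    have := congrArg (fun F => Polynomial.coeff F i) h0
    simp only [Ψ, coeff_add, coeff_map, coeff_C_mul, coeff_zero] at this
    exact s_unique this
  constructor <;> [skip; skip] <;>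
    · rw [← sub_eq_zero]
      ext i
      simp [(key i).1, (key i).2]

lemma psi_add (p q p' q' : Polynomial (ZMod 2)) :
    Ψ p q + Ψ p' q' = Ψ (p + p') (q + q') := by
  unfold Ψ; simp only [Polynomial.map_add]; ring

lemma psi_f (f : Polynomial (ZMod 2)) : f.map φ = Ψ f 0 := by
  unfold Ψ; simp

lemma psi_wf (f : Polynomial (ZMod 2)) : C w * f.map φ = Ψ 0 f := by
  unfold Ψ; simp

lemma psi_xn (n : ℕ) : (X : Polynomial S) ^ n - 1 = Ψ (X ^ n - 1) 0 := by
  rw [← psi_f]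
  simp [Polynomial.map_sub, Polynomial.map_pow]

lemma mem_ideal_iff {n : ℕ} {f₁ f₂ f₃ : Polynomial (ZMod 2)}
    (hprod : f₁ * f₂ * f₃ = X ^ n - 1) (hcop : IsCoprime f₂ f₃)
    (p q : Polynomial (ZMod 2)) :
    Ψ p q ∈ Ideal.span ({(f₁ * f₂).map φ, C w * (f₁ * f₃).map φ,
      X ^ n - 1} : Set (Polynomial S)) ↔ (f₁ * f₂ ∣ p) ∧ (f₁ ∣ q) := by
  constructor
  · intro h
    rw [Ideal.mem_span_insert] at h
    obtain ⟨α, z, hz, hrep⟩ := h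
    rw [Ideal.mem_span_insert] at hz
    obtain ⟨β, z', hz', hrep'⟩ := hz
    rw [Ideal.mem_span_singleton'] at hz'
    obtain ⟨γ, hγ⟩ := hz'
    obtain ⟨a0, a1, rfl⟩ := psi_surj α
    obtain ⟨b0, b1, rfl⟩ := psi_surj β
    obtain ⟨c0, c1, rfl⟩ := psi_surj γ
    rw [hrep', ← hγ] at hrep
    rw [psi_f (f₁ * f₂), psi_wf (f₁ * f₃), psi_xn n] at hrep
    rw [psi_mul, psi_mul, psi_mul, psi_add, psi_add] at hrep
    obtain ⟨hp, hq⟩ := psi_inj hrep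
    constructor
    · rw [hp]
      have hdvd : f₁ * f₂ ∣ X ^ n - 1 := ⟨f₃, by rw [← hprod]⟩
      simp only [mul_zero, add_zero, zero_add]
      exact dvd_add (dvd_mul_left _ _) (Dvd.dvd.mul_left hdvd _)
    · rw [hq]
      simp only [mul_zero, add_zero, zero_add, mul_one]
      have h1 : f₁ ∣ X ^ n - 1 := ⟨f₂ * f₃, by rw [← hprod]; ring⟩
      have h2 : f₁ ∣ f₁ * f₂ := Dvd.intro _ rfl
      have h3 : f₁ ∣ f₁ * f₃ := Dvd.intro _ rfl
      exact dvd_add (h2.mul_left _) (dvd_add (h3.mul_left _) (h1.mul_left _))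
  · rintro ⟨⟨u, hu⟩, ⟨v, hv⟩⟩
    obtain ⟨s, t, hst⟩ := hcop
    have hq : q = f₁ * f₂ * (s * v) + f₁ * f₃ * (t * v) := by
      rw [hv]
      calc f₁ * v = f₁ * v * (s * f₂ + t * f₃) := by rw [hst, mul_one]
      _ = f₁ * f₂ * (s * v) + f₁ * f₃ * (t * v) := by ring
    have key : Ψ p q = Ψ (f₁ * f₂) 0 * Ψ u (s * v) + Ψ 0 (f₁ * f₃) * Ψ (t * v) 0 := by
      rw [psi_mul, psi_mul, psi_add]
      congr 1
      · rw [hu]; ring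
      · rw [hq]; ring
    rw [key, psi_f (f₁ * f₂), psi_wf (f₁ * f₃)]
    apply Ideal.add_mem
    · rw [mul_comm (Ψ _ _) (Ψ _ _)]; exact Ideal.mul_mem_left _ _ (Ideal.subset_span (by simp))
    · rw [mul_comm (Ψ _ _) (Ψ _ _)]; exact Ideal.mul_mem_left _ _ (Ideal.subset_span (by simp))

/-! ### Binary polynomial vectors -/

def pol {n : ℕ} (a : Fin n → ZMod 2) : Polynomial (ZMod 2) :=
  ∑ i : Fin n, C (a i) * X ^ (i : ℕ)

lemma coeff_pol {n : ℕ} (a : Fin n → ZMod 2) (k : ℕ) :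
    (pol a).coeff k = if h : k < n then a ⟨k, h⟩ else 0 := by
  unfold pol
  rw [finset_sum_coeff]
  simp only [coeff_C_mul, coeff_X_pow, mul_ite, mul_one, mul_zero]
  split_ifs with h
  · rw [Finset.sum_eq_single (⟨k, h⟩ : Fin n)]
    · simp
    · intro b _ hb
      simp only [ite_eq_right_iff]
      intro hk
      exact absurd (Fin.ext hk.symm) hb
    · simp
  · apply Finset.sum_eq_zero
    intro i _
    simp only [ite_eq_right_iff]
    intro hk
    exact absurd (hk ▸ i.isLt) h

lemma natDegree_pol_le {n : ℕ} (a : Fin n → ZMod 2) : (pol a).natDegree ≤ n - 1 := by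
  rw [natDegree_le_iff_coeff_eq_zero]
  intro N hN
  rw [coeff_pol]
  rw [dif_neg]
  omega

lemma pol_coeffs {n : ℕ} {p : Polynomial (ZMod 2)} (h : p.natDegree < n) :
    pol (fun i : Fin n => p.coeff (i : ℕ)) = p := by
  ext k
  rw [coeff_pol]
  split_ifs with hk
  · rfl
  · exact (coeff_eq_zero_of_natDegree_lt (lt_of_lt_of_le h (not_lt.mp hk))).symm

lemma pol_zero {n : ℕ} : pol (0 : Fin n → ZMod 2) = 0 := by
  unfold pol; simp

lemma natDegree_reflect_le {N : ℕ} {f : Polynomial (ZMod 2)} (h : f.natDegree ≤ N) :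
    (reflect N f).natDegree ≤ N := by
  rw [natDegree_le_iff_coeff_eq_zero]
  intro m hm
  rw [coeff_reflect, revAt_eq_self_of_lt hm]
  exact coeff_eq_zero_of_natDegree_lt (lt_of_le_of_lt h hm)

lemma reflect_reflect (N : ℕ) (f : Polynomial (ZMod 2)) : reflect N (reflect N f) = f := by
  ext i
  simp [coeff_reflect]

lemma coeff_pol_fin {n : ℕ} (a : Fin n → ZMod 2) (i : Fin n) :
    (pol a).coeff (i : ℕ) = a i := by
  rw [coeff_pol, dif_pos i.isLt]

lemma inner_eq_coeff {n : ℕ} (hpos : 0 < n) (a b : Fin n → ZMod 2) :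
    ∑ i, a i * b i = (pol a * reflect (n - 1) (pol b)).coeff (n - 1) := by
  rw [coeff_mul, Finset.Nat.sum_antidiagonal_eq_sum_range_succ_mk]
  rw [show (n-1).succ = n by omega]
  rw [← Fin.sum_univ_eq_sum_range (fun k => (pol a).coeff k * (reflect (n-1) (pol b)).coeff (n-1-k))]
  apply Finset.sum_congr rfl
  intro i _
  rw [coeff_reflect, revAt_le (by omega : n-1-(i:ℕ) ≤ n-1),
    show n-1-(n-1-(i:ℕ)) = (i:ℕ) by omega, coeff_pol_fin, coeff_pol_fin]

lemma xn_monic {n : ℕ} (hpos : 0 < n) : (X ^ n - 1 : Polynomial (ZMod 2)).Monic := by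
  have := monic_X_pow_sub_C (1 : ZMod 2) hpos.ne'
  simpa using this

lemma xn_natDegree {n : ℕ} (hpos : 0 < n) :
    (X ^ n - 1 : Polynomial (ZMod 2)).natDegree = n := by
  have : (X ^ n - 1 : Polynomial (ZMod 2)) = X ^ n - C 1 := by simp
  rw [this, natDegree_X_pow_sub_C]

lemma xn_ne_zero {n : ℕ} (hpos : 0 < n) : (X ^ n - 1 : Polynomial (ZMod 2)) ≠ 0 :=
  (xn_monic hpos).ne_zero

lemma coeff_zero_eq_one {n : ℕ} (hpos : 0 < n) {g h : Polynomial (ZMod 2)}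
    (hgh : g * h = X ^ n - 1) : g.coeff 0 = 1 ∧ h.coeff 0 = 1 := by
  have h0 : g.coeff 0 * h.coeff 0 = 1 := by
    rw [← mul_coeff_zero, hgh]
    simp only [coeff_sub, coeff_X_pow, coeff_one, if_pos rfl, if_neg (by omega : ¬ (0 = n))]
    decide
  revert h0
  generalize g.coeff 0 = x
  generalize h.coeff 0 = y
  revert x y
  decide

lemma rev_monic {p : Polynomial (ZMod 2)} (h0 : p.coeff 0 = 1) : p.reverse.Monic := by
  have htd : p.natTrailingDegree = 0 := by
    apply natTrailingDegree_eq_zero.mpr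
    right
    rw [h0]; exact one_ne_zero
  unfold Polynomial.Monic
  rw [reverse_leadingCoeff, trailingCoeff, htd, h0]

/-- The key duality lemma for binary cyclic codes. -/
lemma dual_cyclic {n : ℕ} (hpos : 0 < n) {g h : Polynomial (ZMod 2)}
    (hg : g.Monic) (hgh : g * h = X ^ n - 1) (x : Fin n → ZMod 2) :
    (∀ a : Fin n → ZMod 2, g ∣ pol a → ∑ i, a i * x i = 0) ↔ h.reverse ∣ pol x := by
  have hh : h.Monic := hg.of_mul_monic_left (hgh ▸ xn_monic hpos)
  have hdeg : g.natDegree + h.natDegree = n := by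
    have := natDegree_mul hg.ne_zero hh.ne_zero
    rw [hgh, xn_natDegree hpos] at this
    omega
  have hh0 : h.coeff 0 = 1 := (coeff_zero_eq_one hpos hgh).2
  have hhtd : h.natTrailingDegree = 0 := by
    apply natTrailingDegree_eq_zero.mpr
    right
    rw [hh0]; exact one_ne_zero
  have hrevdeg : h.reverse.natDegree = h.natDegree := by
    rw [reverse_natDegree, hhtd]
    omega
  have hrevmonic : h.reverse.Monic := rev_monic hh0
  constructor
  · -- orthogonality implies divisibility
    intro hortho
    by_cases hx : pol x = 0
    · rw [hx]; exact dvd_zero _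
    set Ng := g.natDegree with hNg
    set Q := g * reflect (n - 1) (pol x) with hQ
    have hQcoeff : ∀ k, Ng ≤ k → k ≤ n - 1 → Q.coeff k = 0 := by
      intro k hk1 hk2
      set j := n - 1 - k with hj
      have hjn : j + Ng ≤ n - 1 := by omega
      have hdegXjg : (X ^ j * g).natDegree < n := by
        rw [natDegree_X_pow_mul]
        · omega
        · exact hg.ne_zero
      have hmem : g ∣ pol (fun i : Fin n => (X ^ j * g).coeff (i : ℕ)) := by
        rw [pol_coeffs hdegXjg]
        exact Dvd.intro_left _ rfl
      have := hortho _ hmem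
      rw [inner_eq_coeff hpos, pol_coeffs hdegXjg] at this
      rw [mul_assoc, ← hQ] at this
      rw [show n - 1 = k + j by omega, coeff_X_pow_mul] at this
      exact this
    have hXn := xn_monic hpos
    have hQdeg : Q.natDegree ≤ Ng + (n - 1) := by
      apply le_trans (natDegree_mul_le)
      have := natDegree_reflect_le (N := n - 1) (f := pol x) (natDegree_pol_le x)
      omega
    have hdvdQ : (X ^ n - 1 : Polynomial (ZMod 2)) ∣ Q := by
      by_cases hNg0 : Ng = 0
      · have : Q = 0 := by
          ext k
          by_cases hk : k ≤ n - 1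
          · exact hQcoeff k (by omega) hk
          · exact coeff_eq_zero_of_natDegree_lt (by omega)
        rw [this]; exact dvd_zero _
      · set r := Q %ₘ (X ^ n - 1) with hr
        set qd := Q /ₘ (X ^ n - 1) with hqd
        have hqddeg : qd.natDegree ≤ Ng - 1 := by
          rw [hqd, natDegree_divByMonic Q hXn, xn_natDegree hpos]
          omega
        have hrQ : r = Q - (X ^ n - 1) * qd := by
          rw [hr, hqd, eq_sub_iff_add_eq]
          exact modByMonic_add_div Q _
        have hrdeg : r.degree < (X ^ n - 1 : Polynomial (ZMod 2)).degree :=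
          degree_modByMonic_lt Q hXn
        have hrcoeff : ∀ k, Ng ≤ k → r.coeff k = 0 := by
          intro k hk
          by_cases hkn : k < n
          · rw [hrQ]
            rw [coeff_sub, hQcoeff k hk (by omega), sub_mul, one_mul, coeff_sub]
            have e1 : ((X : Polynomial (ZMod 2)) ^ n * qd).coeff k = 0 := by
              rw [mul_comm, coeff_mul_X_pow']
              rw [if_neg (by omega)]
            have e2 : qd.coeff k = 0 :=
              coeff_eq_zero_of_natDegree_lt (by omega)
            rw [e1, e2]
            ring
          · apply coeff_eq_zero_of_degree_lt
            apply lt_of_lt_of_le hrdeg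
            rw [degree_eq_natDegree (xn_ne_zero hpos), xn_natDegree hpos]
            exact_mod_cast Nat.not_lt.mp hkn
        have hrdvd : g ∣ r := by
          rw [hrQ]
          apply dvd_sub
          · exact Dvd.intro _ rfl
          · exact Dvd.dvd.mul_right ⟨h, hgh.symm⟩ qd
        have hr0 : r = 0 := by
          by_contra hne
          have h1 : g.natDegree ≤ r.natDegree := natDegree_le_of_dvd hrdvd hne
          have h2 : r.natDegree ≤ Ng - 1 := by
            rw [natDegree_le_iff_coeff_eq_zero]
            intro N hN
            exact hrcoeff N (by omega)
          omega
        rw [hr0, eq_comm, sub_eq_zero] at hrQ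
        exact ⟨qd, hrQ⟩
    obtain ⟨v', hv'⟩ : h ∣ reflect (n - 1) (pol x) := by
      obtain ⟨c, hc⟩ := hdvdQ
      rw [← hgh, hQ] at hc
      exact ⟨c, mul_left_cancel₀ hg.ne_zero (by rw [hc]; ring)⟩
    by_cases hrefl0 : reflect (n - 1) (pol x) = 0
    · rw [reflect_eq_zero_iff] at hrefl0
      exact absurd hrefl0 hx
    have hv'ne : v' ≠ 0 := by
      intro h0; rw [h0, mul_zero] at hv'; exact hrefl0 hv'
    have hdegs : h.natDegree + v'.natDegree ≤ n - 1 := by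
      have h1 := natDegree_mul hh.ne_zero hv'ne
      rw [← hv'] at h1
      have h2 := natDegree_reflect_le (N := n-1) (f := pol x) (natDegree_pol_le x)
      omega
    have hsplit : reflect (n - 1) (h * v') = h.reverse * reflect (n - 1 - h.natDegree) v' := by
      conv_lhs => rw [show n - 1 = h.natDegree + (n - 1 - h.natDegree) by omega]
      exact reflect_mul h v' le_rfl (by omega)
    have hfin : pol x = h.reverse * reflect (n - 1 - h.natDegree) v' := by
      have h2 := congrArg (reflect (n - 1)) hv'
      rw [_root_.reflect_reflect] at h2
      rw [h2, hsplit]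
    exact ⟨_, hfin⟩
  · -- divisibility implies orthogonality
    intro hdvd a hga
    rw [inner_eq_coeff hpos]
    by_cases hx : pol x = 0
    · rw [hx]; simp
    by_cases ha : pol a = 0
    · rw [ha]; simp
    obtain ⟨u, hu⟩ := hga
    obtain ⟨v, hv⟩ := hdvd
    have hune : u ≠ 0 := fun h0 => ha (by rw [hu, h0, mul_zero])
    have hvne : v ≠ 0 := fun h0 => hx (by rw [hv, h0, mul_zero])
    have hadeg : g.natDegree + u.natDegree ≤ n - 1 := by
      have h1 := natDegree_mul hg.ne_zero hune
      rw [← hu] at h1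
      have := natDegree_pol_le a
      omega
    have hxdeg : h.natDegree + v.natDegree ≤ n - 1 := by
      have h1 := natDegree_mul hrevmonic.ne_zero hvne
      rw [← hv, hrevdeg] at h1
      have := natDegree_pol_le x
      omega
    have hrefl : reflect (n - 1) (pol x) = h * reflect (n - 1 - h.natDegree) v := by
      rw [hv]
      conv_lhs => rw [show n - 1 = h.natDegree + (n - 1 - h.natDegree) by omega]
      rw [reflect_mul h.reverse v (by rw [hrevdeg]) (by omega)]
      congr 1
      exact reflect_reflect _ _
    have hn2 : 2 ≤ n := by omega
    have key : pol a * reflect (n - 1) (pol x) =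
        (X ^ n - 1) * (u * reflect (n - 1 - h.natDegree) v) := by
      rw [hu, hrefl, ← hgh]; ring
    rw [key]
    have hdegprod : (u * reflect (n - 1 - h.natDegree) v).natDegree ≤ n - 2 := by
      apply le_trans natDegree_mul_le
      have h2 := natDegree_reflect_le (N := n - 1 - h.natDegree)
        (f := v) (by omega)
      omega
    rw [sub_mul, one_mul, coeff_sub]
    have e1 : ((X : Polynomial (ZMod 2)) ^ n * (u * reflect (n - 1 - h.natDegree) v)).coeff (n-1)
        = 0 := by
      rw [mul_comm, coeff_mul_X_pow']
      rw [if_neg (by omega)]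
    have e2 : (u * reflect (n - 1 - h.natDegree) v).coeff (n-1) = 0 :=
      coeff_eq_zero_of_natDegree_lt (by omega)
    rw [e1, e2]
    ring

lemma coprime23 {n : ℕ} (hodd : Odd n) (hpos : 0 < n) {f₁ f₂ f₃ : Polynomial (ZMod 2)}
    (hprod : f₁ * f₂ * f₃ = X ^ n - 1) : IsCoprime f₂ f₃ := by
  have hder : derivative (X ^ n - 1 : Polynomial (ZMod 2)) = X ^ (n - 1) := by
    rw [derivative_sub, derivative_one, derivative_X_pow, sub_zero]
    have : ((n : ZMod 2)) = 1 := by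
      rw [← ZMod.natCast_mod, Nat.odd_iff.mp hodd, Nat.cast_one]
    rw [this, map_one, one_mul]
  have hsep : (X ^ n - 1 : Polynomial (ZMod 2)).Separable := by
    unfold Polynomial.Separable
    rw [hder]
    refine ⟨-1, X, ?_⟩
    rw [show (X : Polynomial (ZMod 2)) * X ^ (n - 1) = X ^ n by
      rw [← pow_succ']; congr 1; omega]
    ring
  have hsq : Squarefree (f₂ * f₃) :=
    Squarefree.squarefree_of_dvd ⟨f₁, by rw [← hprod]; ring⟩ hsep.squarefree
  exact isRelPrime_iff_isCoprime.mp (squarefree_mul_iff.mp hsq).1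

lemma dvd_of_code_le {n : ℕ} (hpos : 0 < n) {p p' : Polynomial (ZMod 2)} (hp : p.Monic)
    (hdp : p ∣ X ^ n - 1) (hdp' : p' ∣ X ^ n - 1)
    (hle : ∀ a : Fin n → ZMod 2, p ∣ pol a → p' ∣ pol a) : p' ∣ p := by
  have hdeg : p.natDegree ≤ n := by
    have := natDegree_le_of_dvd hdp (xn_ne_zero hpos)
    rwa [xn_natDegree hpos] at this
  rcases lt_or_eq_of_le hdeg with hlt | heq
  · have := hle (fun i => p.coeff (i : ℕ)) (by rw [pol_coeffs hlt])
    rwa [pol_coeffs hlt] at this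
  · obtain ⟨c, hc⟩ := hdp
    have hcm : c.Monic := hp.of_mul_monic_left (hc ▸ xn_monic hpos)
    have hcdeg : c.natDegree = 0 := by
      have h2 := natDegree_mul hp.ne_zero hcm.ne_zero
      rw [← hc, xn_natDegree hpos] at h2
      omega
    have hc1 : c = 1 := eq_one_of_monic_natDegree_zero hcm hcdeg
    rw [hc1, mul_one] at hc
    rw [← hc]
    exact hdp'

lemma eq_of_code_eq {n : ℕ} (hpos : 0 < n) {p p' : Polynomial (ZMod 2)}
    (hp : p.Monic) (hp' : p'.Monic) (hdp : p ∣ X ^ n - 1) (hdp' : p' ∣ X ^ n - 1)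
    (hiff : ∀ a : Fin n → ZMod 2, p ∣ pol a ↔ p' ∣ pol a) : p = p' :=
  eq_of_monic_of_associated hp hp' (associated_of_dvd_dvd
    (dvd_of_code_le hpos hp' hdp' hdp (fun a ha => (hiff a).mpr ha))
    (dvd_of_code_le hpos hp hdp hdp' (fun a ha => (hiff a).mp ha)))

lemma xn_reverse {n : ℕ} (hpos : 0 < n) :
    (X ^ n - 1 : Polynomial (ZMod 2)).reverse = X ^ n - 1 := by
  have h1 : (X ^ n - 1 : Polynomial (ZMod 2)) = X ^ n + 1 := CharTwo.sub_eq_add _ _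
  rw [h1]
  unfold Polynomial.reverse
  rw [show (X ^ n + 1 : Polynomial (ZMod 2)).natDegree = n by
    rw [← h1]; exact xn_natDegree hpos]
  rw [show (1 : Polynomial (ZMod 2)) = X ^ 0 by simp, reflect_add,
    reflect_monomial, reflect_monomial, revAt_le le_rfl, revAt_le (Nat.zero_le n)]
  simp [add_comm]

lemma inner_S {n : ℕ} (a b a' b' : Fin n → ZMod 2) :
    ∑ i, ((φ (a i) + w * φ (b i)) * (φ (a' i) + w * φ (b' i)))
      = φ (∑ i, a i * a' i) + w * φ (∑ i, (a i * b' i + b i * a' i)) := by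
  have hterm : ∀ x y x' y' : ZMod 2,
      (φ x + w * φ y) * (φ x' + w * φ y') = φ (x * x') + w * φ (x * y' + y * x') := by
    intro x y x' y'
    simp only [map_mul, map_add]
    linear_combination (φ y * φ y') * w_mul_w
  rw [Finset.sum_congr rfl (fun i _ => hterm (a i) (b i) (a' i) (b' i))]
  rw [Finset.sum_add_distrib, ← map_sum φ, ← Finset.mul_sum, ← map_sum φ]

/-- The cyclic code `C = (f₁f₂, w·f₁f₃)` of odd length `n` over `S`, where
`f₁f₂f₃ = Yⁿ - 1`, is self-dual if and only if `f₁ = f̂₃` and `f₂ = f̂₂`. -/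
theorem selfDual_iff_reciprocal (n : ℕ) (hodd : Odd n) (hpos : 0 < n)
    (f₁ f₂ f₃ : Polynomial (ZMod 2))
    (h₁ : f₁.Monic) (h₂ : f₂.Monic) (h₃ : f₃.Monic)
    (hprod : f₁ * f₂ * f₃ = X ^ n - 1) :
    cyclicCodeS n f₁ f₂ f₃ = dualCode n (cyclicCodeS n f₁ f₂ f₃) ↔
      f₁ = f₃.reverse ∧ f₂ = f₂.reverse := by
  have hcop : IsCoprime f₂ f₃ := coprime23 hodd hpos hprod
  have hprod' : f₁ * (f₂ * f₃) = X ^ n - 1 := by rw [← hprod]; ring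
  -- coefficient-zero facts
  have hc0 := coeff_zero_eq_one hpos hprod'
  have hc23 : f₂.coeff 0 = 1 ∧ f₃.coeff 0 = 1 := by
    have h0 : f₂.coeff 0 * f₃.coeff 0 = 1 := by rw [← mul_coeff_zero]; exact hc0.2
    revert h0
    generalize f₂.coeff 0 = x
    generalize f₃.coeff 0 = y
    revert x y
    decide
  have hrev2m : f₂.reverse.Monic := rev_monic hc23.1
  have hrev3m : f₃.reverse.Monic := rev_monic hc23.2
  -- divisibility facts
  have hd1 : f₁ ∣ X ^ n - 1 := ⟨f₂ * f₃, hprod'.symm⟩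
  have hd12 : f₁ * f₂ ∣ X ^ n - 1 := ⟨f₃, hprod.symm⟩
  have hrevprod : f₁.reverse * f₂.reverse * f₃.reverse = X ^ n - 1 := by
    rw [← reverse_mul_of_domain, ← reverse_mul_of_domain, hprod, xn_reverse hpos]
  have hdrev3 : f₃.reverse ∣ X ^ n - 1 := ⟨f₁.reverse * f₂.reverse, by rw [← hrevprod]; ring⟩
  have hdrev23 : f₂.reverse * f₃.reverse ∣ X ^ n - 1 :=
    ⟨f₁.reverse, by rw [← hrevprod]; ring⟩
  -- membership characterization
  have hsum : ∀ a b : Fin n → ZMod 2,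
      (∑ i : Fin n, C (φ (a i) + w * φ (b i)) * X ^ (i : ℕ)) = Ψ (pol a) (pol b) := by
    intro a b
    unfold Ψ pol
    rw [Polynomial.map_sum, Polynomial.map_sum, Finset.mul_sum, ← Finset.sum_add_distrib]
    apply Finset.sum_congr rfl
    intro i _
    simp only [Polynomial.map_mul, Polynomial.map_pow, map_C, map_X, C_add, C_mul]
    ring
  have hmem : ∀ a b : Fin n → ZMod 2,
      ((fun i => φ (a i) + w * φ (b i)) ∈ cyclicCodeS n f₁ f₂ f₃)
        ↔ ((f₁ * f₂ ∣ pol a) ∧ (f₁ ∣ pol b)) := by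
    intro a b
    have : ((fun i => φ (a i) + w * φ (b i)) ∈ cyclicCodeS n f₁ f₂ f₃)
        ↔ Ψ (pol a) (pol b) ∈ Ideal.span ({(f₁ * f₂).map φ, C w * (f₁ * f₃).map φ,
            X ^ n - 1} : Set (Polynomial S)) := by
      simp only [cyclicCodeS, Set.mem_setOf_eq]
      rw [hsum a b]
    rw [this]
    exact mem_ideal_iff hprod hcop _ _
  -- dual membership characterization
  have hdual : ∀ a' b' : Fin n → ZMod 2,
      ((fun i => φ (a' i) + w * φ (b' i)) ∈ dualCode n (cyclicCodeS n f₁ f₂ f₃))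
        ↔ ((f₂.reverse * f₃.reverse ∣ pol a') ∧ (f₃.reverse ∣ pol b')) := by
    intro a' b'
    constructor
    · intro hmemdual
      have key : ∀ a b : Fin n → ZMod 2, f₁ * f₂ ∣ pol a → f₁ ∣ pol b →
          (∑ i, a i * a' i = 0 ∧ ∑ i, (a i * b' i + b i * a' i) = 0) := by
        intro a b ha hb
        have hc : ∑ i, ((φ (a i) + w * φ (b i)) * (φ (a' i) + w * φ (b' i))) = 0 :=
          hmemdual _ ((hmem a b).mpr ⟨ha, hb⟩)
        rw [inner_S] at hc
        exact s_unique hc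
      constructor
      · rw [show f₂.reverse * f₃.reverse = (f₂ * f₃).reverse from
          (reverse_mul_of_domain _ _).symm]
        rw [← dual_cyclic hpos h₁ hprod' a']
        intro b hb
        have := (key 0 b (by rw [pol_zero]; exact dvd_zero _) hb).2
        simpa using this
      · rw [← dual_cyclic hpos (h₁.mul h₂) hprod b']
        intro a ha
        have := (key a 0 ha (by rw [pol_zero]; exact dvd_zero _)).2
        simpa using this
    · rintro ⟨ha', hb'⟩
      intro c hcmem
      obtain ⟨a, b, hab⟩ := fun_decomp c
      have hcfun : c = fun i => φ (a i) + w * φ (b i) := funext hab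
      rw [hcfun] at hcmem ⊢
      obtain ⟨ha, hb⟩ := (hmem a b).mp hcmem
      show ∑ i, ((φ (a i) + w * φ (b i)) * (φ (a' i) + w * φ (b' i))) = 0
      rw [inner_S]
      have e1 : ∑ i, a i * a' i = 0 :=
        (dual_cyclic hpos (h₁.mul h₂) hprod a').mpr
          (dvd_trans (dvd_mul_left _ _) ha') a ha
      have e2 : ∑ i, a i * b' i = 0 :=
        (dual_cyclic hpos (h₁.mul h₂) hprod b').mpr hb' a ha
      have e3 : ∑ i, b i * a' i = 0 :=
        (dual_cyclic hpos h₁ hprod' a').mpr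
          (by rw [show (f₂ * f₃).reverse = f₂.reverse * f₃.reverse from
              reverse_mul_of_domain _ _]; exact ha') b hb
      rw [e1, Finset.sum_add_distrib, e2, e3]
      simp
  constructor
  · intro hE
    have hiff : ∀ a b : Fin n → ZMod 2,
        ((f₁ * f₂ ∣ pol a) ∧ (f₁ ∣ pol b))
          ↔ ((f₂.reverse * f₃.reverse ∣ pol a) ∧ (f₃.reverse ∣ pol b)) := by
      intro a b
      rw [← hmem a b, hE, hdual a b]
    have hb : ∀ bb : Fin n → ZMod 2, f₁ ∣ pol bb ↔ f₃.reverse ∣ pol bb := by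
      intro bb
      simpa [pol_zero, dvd_zero] using hiff 0 bb
    have ha : ∀ aa : Fin n → ZMod 2,
        f₁ * f₂ ∣ pol aa ↔ f₂.reverse * f₃.reverse ∣ pol aa := by
      intro aa
      simpa [pol_zero, dvd_zero] using hiff aa 0
    have e1 : f₁ = f₃.reverse := eq_of_code_eq hpos h₁ hrev3m hd1 hdrev3 hb
    have e2 : f₁ * f₂ = f₂.reverse * f₃.reverse :=
      eq_of_code_eq hpos (h₁.mul h₂) (hrev2m.mul hrev3m) hd12 hdrev23 ha
    refine ⟨e1, ?_⟩
    apply mul_left_cancel₀ h₁.ne_zero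
    rw [e2, ← e1]
    ring
  · rintro ⟨e1, e2⟩
    ext c
    obtain ⟨a, b, hab⟩ := fun_decomp c
    rw [show c = (fun i => φ (a i) + w * φ (b i)) from funext hab]
    rw [hmem a b, hdual a b, ← e1, ← e2, mul_comm f₂ f₁]
end
end
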